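/- For every l ≥ 0, if an (l+1)-UM-critical tree has no vertex of degree at least 3, then it is isomorphic to the path graph P_{2^l} on 2^l vertices. -/

import Mathlib

open scoped Classical

noncomputable section

/-- A conflict-free coloring of a hyperedge set `E` with `k` colors: every hyperedge
has some color occurring on exactly one of its vertices. -/
def IsCFColoring {V : Type} {k : ℕ} (E : Set (Finset V)) (C : V → Fin k) : Prop :=
  ∀ e ∈ E, ∃ c : Fin k, (e.filter fun v => C v = c).card = 1

/-- A unique-maximum coloring of a hyperedge set `E` with `k` colors: every hyperedge
has exactly one vertex whose color is maximum on the hyperedge. -/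
def IsUMColoring {V : Type} {k : ℕ} (E : Set (Finset V)) (C : V → Fin k) : Prop :=
  ∀ e ∈ E, ∃! v, v ∈ e ∧ ∀ u ∈ e, C u ≤ C v

/-- An odd coloring of a hyperedge set `E` with `k` colors: every hyperedge
has some color occurring on an odd number of its vertices. -/
def IsOddColoring {V : Type} {k : ℕ} (E : Set (Finset V)) (C : V → Fin k) : Prop :=
  ∀ e ∈ E, ∃ c : Fin k, Odd ((e.filter fun v => C v = c).card)

/-- The conflict-free chromatic number of a hypergraph. -/
def cfNum {V : Type} (E : Set (Finset V)) : ℕ :=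
  sInf {k | ∃ C : V → Fin k, IsCFColoring E C}

/-- The unique-maximum chromatic number of a hypergraph. -/
def umNum {V : Type} (E : Set (Finset V)) : ℕ :=
  sInf {k | ∃ C : V → Fin k, IsUMColoring E C}

/-- The odd chromatic number of a hypergraph. -/
def oddNum {V : Type} (E : Set (Finset V)) : ℕ :=
  sInf {k | ∃ C : V → Fin k, IsOddColoring E C}

/-- The hyperedges of the path hypergraph of a graph `G`: vertex sets of simple paths. -/
def pathEdges {V : Type} (G : SimpleGraph V) : Set (Finset V) :=
  {S | ∃ (u v : V) (p : G.Walk u v), p.IsPath ∧ S = p.support.toFinset}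

/-- Unique-maximum chromatic number of a graph with respect to paths. -/
def UM {V : Type} (G : SimpleGraph V) : ℕ := umNum (pathEdges G)

/-- Conflict-free chromatic number of a graph with respect to paths. -/
def CF {V : Type} (G : SimpleGraph V) : ℕ := cfNum (pathEdges G)

/-- Odd chromatic number of a graph with respect to paths. -/
def ODD {V : Type} (G : SimpleGraph V) : ℕ := oddNum (pathEdges G)

/-- The complete binary tree with `d` levels (`2^d - 1` vertices), with vertices the
binary strings of length `< d`; each vertex `l` is adjacent to its children `b :: l`. -/
def binaryTree (d : ℕ) : SimpleGraph {l : List Bool // l.length < d} :=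
  SimpleGraph.fromRel fun a b => ∃ bit : Bool, b.1 = bit :: a.1

/-- `IsSubdivPaths G H f P` : the data `f` (branch vertices) and `P` (a path of `H` for
every edge of `G`) witness that `H` contains a subdivision of `G` as a subgraph:
`f` is injective, the paths are internally disjoint from each other and from the
branch vertices. -/
def IsSubdivPaths {V W : Type} (G : SimpleGraph V) (H : SimpleGraph W) (f : V → W)
    (P : ∀ u v, G.Adj u v → H.Walk (f u) (f v)) : Prop :=
  Function.Injective f ∧
  (∀ u v (h : G.Adj u v), (P u v h).IsPath) ∧
  (∀ u v (h : G.Adj u v), P v u h.symm = (P u v h).reverse) ∧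
  (∀ u v (h : G.Adj u v) (w : W),
    w ∈ (P u v h).support → w ≠ f u → w ≠ f v → w ∉ Set.range f) ∧
  (∀ u v (h : G.Adj u v) (u' v' : V) (h' : G.Adj u' v'), s(u, v) ≠ s(u', v') →
    ∀ w : W, w ∈ (P u v h).support → w ∈ (P u' v' h').support → w ∈ Set.range f)

/-- `H` contains a subdivision of `G` as a subgraph. -/
def ContainsSubdivision {V W : Type} (G : SimpleGraph V) (H : SimpleGraph W) : Prop :=
  ∃ f P, IsSubdivPaths G H f P

/-- `IsSubdivision G H f P` : the data `f`, `P` witness that `H` is (exactly) a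
subdivision of `G`: additionally to `IsSubdivPaths`, every vertex of `H` and every
edge of `H` comes from some path replacing an edge of `G`, or is a branch vertex. -/
def IsSubdivision {V W : Type} (G : SimpleGraph V) (H : SimpleGraph W) (f : V → W)
    (P : ∀ u v, G.Adj u v → H.Walk (f u) (f v)) : Prop :=
  IsSubdivPaths G H f P ∧
  (∀ w : W, w ∈ Set.range f ∨ ∃ u v h, w ∈ (P u v h).support) ∧
  (∀ a b : W, H.Adj a b ↔ ∃ u v h, s(a, b) ∈ (P u v h).edges)

/-- `H` is a subdivision of `G`. -/
def Subdivides {V W : Type} (G : SimpleGraph V) (H : SimpleGraph W) : Prop :=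
  ∃ f P, IsSubdivision G H f P

/-- A graph is UM-critical if every proper subgraph has strictly smaller
unique-maximum chromatic number with respect to paths. -/
def UMCritical {V : Type} (G : SimpleGraph V) : Prop :=
  ∀ G' : G.Subgraph, G' ≠ ⊤ → UM G'.coe < UM G

/-- A graph is `k`-UM-critical if it is UM-critical and its UM number equals `k`. -/
def UMCriticalK {V : Type} (k : ℕ) (G : SimpleGraph V) : Prop :=
  UMCritical G ∧ UM G = k

/-- A family of sequences of distinct elements of `Fin n` is prefix set-free if no
nonempty prefix of a member (including the member itself) has the same underlying set
as another member. -/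
def IsPSF {n : ℕ} (F : Finset (List (Fin n))) : Prop :=
  (∀ l ∈ F, l.Nodup) ∧
  ∀ A ∈ F, ∀ B ∈ F, A ≠ B →
    ∀ p : List (Fin n), p ≠ [] → p <+: A → p.toFinset ≠ B.toFinset

/-- A `[k,d,n]` prefix set-free family: ground set `Fin n`, every sequence of length at
least `k`, and at least `2^d` members. -/
def IsPSFFamily (k d n : ℕ) (F : Finset (List (Fin n))) : Prop :=
  IsPSF F ∧ (∀ l ∈ F, k ≤ l.length) ∧ 2 ^ d ≤ F.card

open SimpleGraph

lemma umNum_le {V : Type} {E : Set (Finset V)} {k : ℕ}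
    (h : ∃ C : V → Fin k, IsUMColoring E C) : umNum E ≤ k := Nat.sInf_le h

lemma IsUMColoring.mono {V : Type} {E : Set (Finset V)} {j k : ℕ} (hjk : j ≤ k)
    {C : V → Fin j} (hC : IsUMColoring E C) :
    IsUMColoring E (fun v => Fin.castLE hjk (C v)) := by
  intro e he
  refine (existsUnique_congr fun v => ?_).mpr (hC e he)
  simp only [Fin.le_def, Fin.coe_castLE]

lemma pathEdges_nonempty {V : Type} {G : SimpleGraph V} {e : Finset V}
    (he : e ∈ pathEdges G) : e.Nonempty := by
  obtain ⟨u, v, p, hp, rfl⟩ := he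
  exact ⟨u, List.mem_toFinset.mpr p.start_mem_support⟩

lemma exists_umColoring_card {V : Type} [Fintype V] (G : SimpleGraph V) :
    ∃ C : V → Fin (Fintype.card V), IsUMColoring (pathEdges G) C := by
  refine ⟨Fintype.equivFin V, ?_⟩
  intro e he
  obtain ⟨v, hv, hmax⟩ := Finset.exists_max_image e (fun x => (Fintype.equivFin V x : Fin _))
    (pathEdges_nonempty he)
  refine ⟨v, ⟨hv, hmax⟩, ?_⟩
  rintro w ⟨hw, hmax'⟩
  have h1 : (Fintype.equivFin V w) = (Fintype.equivFin V v) :=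
    le_antisymm (hmax w hw) (hmax' v hv)
  exact (Fintype.equivFin V).injective h1

lemma exists_umColoring_of_UM_le {V : Type} [Fintype V] {G : SimpleGraph V} {k : ℕ}
    (h : UM G ≤ k) : ∃ C : V → Fin k, IsUMColoring (pathEdges G) C := by
  have hne : {j | ∃ C : V → Fin j, IsUMColoring (pathEdges G) C}.Nonempty :=
    ⟨Fintype.card V, exists_umColoring_card G⟩
  have hmem := Nat.sInf_mem hne
  obtain ⟨C, hC⟩ := hmem
  exact ⟨_, hC.mono h⟩

lemma IsUMColoring.comp_iso {V W : Type} {G : SimpleGraph V} {H : SimpleGraph W}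
    (φ : G ≃g H) {k : ℕ} {C : W → Fin k} (hC : IsUMColoring (pathEdges H) C) :
    IsUMColoring (pathEdges G) (fun v => C (φ v)) := by
  intro e he
  obtain ⟨u, v, p, hp, rfl⟩ := he
  have hp' : (p.map φ.toHom).IsPath := Walk.map_isPath_of_injective (RelIso.injective φ) hp
  have he' : (p.map φ.toHom).support.toFinset ∈ pathEdges H := ⟨_, _, _, hp', rfl⟩
  have hsup : (p.map φ.toHom).support.toFinset = p.support.toFinset.image φ := by
    rw [Walk.support_map]
    ext x
    simp
  obtain ⟨v', ⟨hv'mem, hv'max⟩, hv'uniq⟩ := hC _ he'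
  rw [hsup] at hv'mem hv'max
  obtain ⟨v₀, hv₀mem, rfl⟩ := Finset.mem_image.mp hv'mem
  refine ⟨v₀, ⟨hv₀mem, fun u hu => hv'max _ (Finset.mem_image_of_mem _ hu)⟩, ?_⟩
  rintro w ⟨hwmem, hwmax⟩
  have : φ w = φ v₀ := by
    apply hv'uniq
    rw [hsup]
    refine ⟨Finset.mem_image_of_mem _ hwmem, ?_⟩
    intro u' hu'
    obtain ⟨u₀, hu₀mem, rfl⟩ := Finset.mem_image.mp hu'
    exact hwmax u₀ hu₀mem
  exact RelIso.injective φ this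

lemma UM_le_of_iso {V W : Type} {G : SimpleGraph V} {H : SimpleGraph W} (φ : G ≃g H) :
    UM G ≤ UM H := by
  by_cases hne : {j | ∃ C : W → Fin j, IsUMColoring (pathEdges H) C}.Nonempty
  · obtain ⟨C, hC⟩ := Nat.sInf_mem hne
    exact umNum_le ⟨_, hC.comp_iso φ⟩
  · have h0 : UM H = 0 := by
      rw [UM, umNum, Set.not_nonempty_iff_eq_empty.mp hne, Nat.sInf_empty]
    have h0' : UM G = 0 := by
      rw [UM, umNum]
      convert Nat.sInf_empty
      rw [Set.eq_empty_iff_forall_notMem]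
      rintro j ⟨C, hC⟩
      exact hne ⟨j, fun w => C (φ.symm w), by
        have := hC.comp_iso φ.symm
        convert this⟩
    omega

lemma UM_eq_of_iso {V W : Type} {G : SimpleGraph V} {H : SimpleGraph W} (φ : G ≃g H) :
    UM G = UM H := le_antisymm (UM_le_of_iso φ) (UM_le_of_iso φ.symm)


/-- ruler function -/
def rul (x : ℕ) : ℕ := (x+1).factorization 2

lemma rul_lt {k x : ℕ} (h : x + 1 < 2^k) : rul x < k := by
  have hd : 2 ^ rul x ∣ x + 1 := Nat.ordProj_dvd (x+1) 2
  have h1 := Nat.le_of_dvd (Nat.succ_pos x) hd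
  have h2 : (2:ℕ) ^ rul x < 2 ^ k := lt_of_le_of_lt h1 h
  exact (pow_lt_pow_iff_right₀ (by norm_num)).mp h2

lemma rul_between {x y : ℕ} (hxy : x < y) (h : rul x = rul y) :
    ∃ z, x < z ∧ z < y ∧ rul x < rul z := by
  have hvx : rul x = (x+1).factorization 2 := rfl
  have hvy : rul y = (y+1).factorization 2 := rfl
  obtain ⟨p, hp⟩ : 2 ^ rul x ∣ x + 1 := hvx ▸ Nat.ordProj_dvd (x+1) 2
  obtain ⟨q, hq⟩ : 2 ^ rul x ∣ y + 1 := by rw [h, hvy]; exact Nat.ordProj_dvd (y+1) 2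
  have hndx : ¬ 2 ^ (rul x + 1) ∣ x + 1 := by
    rw [hvx]; exact Nat.pow_succ_factorization_not_dvd (by omega) Nat.prime_two
  have hndy : ¬ 2 ^ (rul x + 1) ∣ y + 1 := by
    rw [h, hvy]; exact Nat.pow_succ_factorization_not_dvd (by omega) Nat.prime_two
  have hpos : (0:ℕ) < 2 ^ rul x := Nat.pow_pos (by norm_num)
  have hpodd : ¬ 2 ∣ p := by
    rintro ⟨r, hr⟩
    exact hndx ⟨r, by rw [hp, hr, pow_succ]; ring⟩
  have hqodd : ¬ 2 ∣ q := by
    rintro ⟨r, hr⟩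
    exact hndy ⟨r, by rw [hq, hr, pow_succ]; ring⟩
  have hpq : p < q := by
    have : 2 ^ rul x * p < 2 ^ rul x * q := by omega
    exact Nat.lt_of_mul_lt_mul_left this
  have hpq2 : p + 1 < q := by
    rcases Nat.lt_or_ge (p+1) q with h'|h'
    · exact h'
    · exfalso
      have : q = p + 1 := by omega
      exact hqodd (by omega)
  refine ⟨2 ^ rul x * (p+1) - 1, ?_, ?_, ?_⟩
  · have : 2 ^ rul x * p < 2 ^ rul x * (p+1) := by nlinarith
    omega
  · have : 2 ^ rul x * (p+1) < 2 ^ rul x * q := by nlinarith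
    omega
  · have hone : 1 ≤ 2 ^ rul x * (p+1) := Nat.succ_le_of_lt (Nat.mul_pos hpos (by omega))
    have hz1 : 2 ^ rul x * (p+1) - 1 + 1 = 2 ^ rul x * (p+1) := by omega
    have hdvd : 2 ^ (rul x + 1) ∣ 2 ^ rul x * (p+1) := by
      obtain ⟨r, hr⟩ : 2 ∣ p + 1 := by omega
      exact ⟨r, by rw [hr, pow_succ]; ring⟩
    have hle : rul x + 1 ≤ (2 ^ rul x * (p+1)).factorization 2 :=
      (Nat.Prime.pow_dvd_iff_le_factorization Nat.prime_two (by omega)).mp hdvd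
    have hrz : rul (2 ^ rul x * (p+1) - 1) = (2 ^ rul x * (p+1) - 1 + 1).factorization 2 := rfl
    rw [hz1] at hrz
    omega


lemma um_lower (k : ℕ) : ∀ (C : ℕ → ℕ) (a b : ℕ),
    (∀ x, a ≤ x → x ≤ b → C x < k) →
    (∀ c d, a ≤ c → c ≤ d → d ≤ b →
      ∃! v, v ∈ Finset.Icc c d ∧ ∀ u ∈ Finset.Icc c d, C u ≤ C v) →
    b + 1 - a ≤ 2 ^ k - 1 := by
  induction k with
  | zero =>
    intro C a b hcol _
    rcases le_or_gt a b with h | h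
    · exact absurd (hcol a le_rfl h) (by omega)
    · omega
  | succ k ih =>
    intro C a b hcol hum
    rcases Nat.lt_or_ge b a with h | hab
    · have : (1:ℕ) ≤ 2 ^ k := Nat.one_le_two_pow
      have : (2:ℕ)^(k+1) = 2 * 2^k := by ring
      omega
    obtain ⟨m, ⟨hm_mem, hm_max⟩, huniq⟩ := hum a b le_rfl hab le_rfl
    rw [Finset.mem_Icc] at hm_mem
    have hlt : ∀ u, a ≤ u → u ≤ b → u ≠ m → C u < C m := by
      intro u h1 h2 hne
      have hle : C u ≤ C m := hm_max u (Finset.mem_Icc.mpr ⟨h1, h2⟩)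
      rcases Nat.lt_or_ge (C u) (C m) with h' | h'
      · exact h'
      · exfalso
        have hequ : C u = C m := le_antisymm hle h'
        have : u = m := huniq u ⟨Finset.mem_Icc.mpr ⟨h1, h2⟩, fun w hw => (hm_max w hw).trans hequ.ge⟩
        exact hne this
    have hleft : m - a ≤ 2 ^ k - 1 := by
      rcases Nat.lt_or_ge a m with h | h
      · have := ih C a (m-1)
          (fun x h1 h2 => lt_of_lt_of_le (hlt x h1 (by omega) (by omega))
            (Nat.lt_succ_iff.mp (hcol m hm_mem.1 hm_mem.2)))
          (fun c d h1 h2 h3 => hum c d h1 h2 (by omega))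
        omega
      · omega
    have hright : b - m ≤ 2 ^ k - 1 := by
      rcases Nat.lt_or_ge m b with h | h
      · have := ih C (m+1) b
          (fun x h1 h2 => lt_of_lt_of_le (hlt x (by omega) h2 (by omega))
            (Nat.lt_succ_iff.mp (hcol m hm_mem.1 hm_mem.2)))
          (fun c d h1 h2 h3 => hum c d (by omega) h2 h3)
        omega
      · omega
    have h1 : (1:ℕ) ≤ 2 ^ k := Nat.one_le_two_pow
    have h2 : (2:ℕ)^(k+1) = 2 * 2^k := by ring
    omega


/-- Convexity of walk supports in the path graph. -/
lemma pg_support_convex {n : ℕ} {u v : Fin n} (p : (pathGraph n).Walk u v) :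
    ∀ a ∈ p.support, ∀ c : Fin n,
      ((u ≤ c ∧ c ≤ a) ∨ (a ≤ c ∧ c ≤ u)) → c ∈ p.support := by
  induction p with
  | nil =>
    intro a ha c hc
    simp only [Walk.support_nil, List.mem_singleton] at ha ⊢
    subst ha
    rcases hc with ⟨h1, h2⟩ | ⟨h1, h2⟩ <;> exact le_antisymm h2 h1
  | @cons u w v h q ih =>
    intro a ha c hc
    simp only [Walk.support_cons, List.mem_cons] at ha ⊢
    rcases eq_or_ne c u with rfl | hcu
    · exact Or.inl rfl
    have hcu' : c.val ≠ u.val := fun hh => hcu (Fin.ext hh)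
    rcases ha with rfl | ha
    · -- a = u, c between u and u means c = u
      exfalso
      apply hcu
      rcases hc with ⟨h1, h2⟩ | ⟨h1, h2⟩ <;> exact le_antisymm h2 h1
    · right
      rw [pathGraph_adj] at h
      rw [Fin.le_def] at hc
      rw [Fin.le_def] at hc
      refine ih a ha c ?_
      rcases h with h | h
      · -- w = u + 1
        rcases hc with ⟨h1, h2⟩ | ⟨h1, h2⟩
        · exact Or.inl ⟨Fin.le_def.mpr (by omega), h2⟩
        · exact Or.inr ⟨h1, Fin.le_def.mpr (by omega)⟩
      · -- u = w + 1
        rcases hc with ⟨h1, h2⟩ | ⟨h1, h2⟩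
        · exact Or.inl ⟨Fin.le_def.mpr (by omega), h2⟩
        · exact Or.inr ⟨h1, Fin.le_def.mpr (by omega)⟩


lemma pg_exists_path {n : ℕ} : ∀ (d : ℕ) (a b : Fin n), a ≤ b → b.val - a.val = d →
    ∃ p : (pathGraph n).Walk a b, p.IsPath ∧ p.support.toFinset = Finset.Icc a b := by
  intro d
  induction d with
  | zero =>
    intro a b hab hd
    have : a = b := Fin.ext (by rw [Fin.le_def] at hab; omega)
    subst this
    refine ⟨Walk.nil, Walk.IsPath.nil, ?_⟩
    ext x
    simp [Finset.mem_Icc, le_antisymm_iff, and_comm]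
  | succ d ih =>
    intro a b hab hd
    have hab' : a.val < b.val := by omega
    have ha1 : a.val + 1 < n := lt_of_le_of_lt (by omega) b.isLt
    have hadj : (pathGraph n).Adj a ⟨a.val + 1, ha1⟩ := pathGraph_adj.mpr (Or.inl rfl)
    obtain ⟨q, hq, hqs⟩ := ih ⟨a.val + 1, ha1⟩ b (Fin.le_def.mpr (by simp; omega))
      (by simp; omega)
    refine ⟨Walk.cons hadj q, ?_, ?_⟩
    · refine hq.cons ?_
      intro hmem
      have h2 : a ∈ q.support.toFinset := List.mem_toFinset.mpr hmem
      rw [hqs, Finset.mem_Icc, Fin.le_def, Fin.le_def] at h2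
      simp at h2
    · ext x
      simp only [Walk.support_cons, List.toFinset_cons, Finset.mem_insert, List.mem_toFinset,
        ← List.mem_toFinset, hqs, Finset.mem_Icc, Fin.le_def, Fin.ext_iff]

      constructor
      · rintro (h | ⟨h1, h2⟩)
        · omega
        · omega
      · rintro ⟨h1, h2⟩
        rcases eq_or_ne x.val a.val with h | h
        · exact Or.inl h
        · exact Or.inr ⟨by omega, h2⟩

lemma support_convex {n : ℕ} {u v : Fin n} (p : (pathGraph n).Walk u v)
    {x y z : Fin n} (hx : x ∈ p.support) (hy : y ∈ p.support)
    (h1 : x ≤ z) (h2 : z ≤ y) : z ∈ p.support := by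
  rcases le_total u z with h | h
  · exact pg_support_convex p y hy z (Or.inl ⟨h, h2⟩)
  · exact pg_support_convex p x hx z (Or.inr ⟨h1, h⟩)

lemma pg_exists_path' {n : ℕ} (a b : Fin n) (hab : a ≤ b) :
    ∃ p : (pathGraph n).Walk a b, p.IsPath ∧ ∀ x, x ∈ p.support ↔ (a ≤ x ∧ x ≤ b) := by
  obtain ⟨p, hp, hps⟩ := pg_exists_path (b.val - a.val) a b hab rfl
  exact ⟨p, hp, fun x => by rw [← List.mem_toFinset, hps, Finset.mem_Icc]⟩

lemma mem_toFinset_any {α : Type*} (inst : DecidableEq α) (a : α) (l : List α) :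
    a ∈ @List.toFinset α inst l ↔ a ∈ l := @List.mem_toFinset α inst _ _

lemma exists_ruler_coloring {n k : ℕ} (h : n + 1 ≤ 2^k) :
    ∃ C : Fin n → Fin k, IsUMColoring (pathEdges (pathGraph n)) C := by
  refine ⟨fun i => ⟨rul i.val, rul_lt (by omega)⟩, ?_⟩
  rintro e ⟨u, v, p, hp, he⟩
  set C : Fin n → Fin k := fun i => ⟨rul i.val, rul_lt (by omega)⟩ with hCdef
  have hmeme : ∀ x : Fin n, x ∈ e ↔ x ∈ p.support := by
    intro x; rw [he]; exact mem_toFinset_any _ _ _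
  obtain ⟨m, hm, hmax⟩ := Finset.exists_max_image e C ⟨u, (hmeme u).mpr p.start_mem_support⟩
  refine ⟨m, ⟨hm, hmax⟩, ?_⟩
  rintro w ⟨hw, hwmax⟩
  by_contra hne
  have hCeq : C w = C m := le_antisymm (hmax w hw) (hwmax m hm)
  have hrul : rul w.val = rul m.val := by
    have := congrArg Fin.val hCeq
    simpa [hCdef] using this
  have key : ∀ a b : Fin n, a ∈ e → b ∈ e →
      a.val < b.val → rul a.val = rul b.val →
      (∀ x ∈ e, C x ≤ C a) → False := by
    intro a b ha hb hab hr hamax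
    obtain ⟨z, hz1, hz2, hz3⟩ := rul_between hab hr
    have hzn : z < n := lt_trans hz2 b.isLt
    have hzmem : (⟨z, hzn⟩ : Fin n) ∈ e := by
      rw [hmeme] at ha hb ⊢
      exact support_convex p ha hb (by rw [Fin.le_def]; simp; omega)
        (by rw [Fin.le_def]; simp; omega)
    have := hamax _ hzmem
    rw [Fin.le_def] at this
    simp [hCdef] at this
    omega
  rcases lt_trichotomy w.val m.val with h' | h' | h'
  · exact key w m hw hm h' hrul hwmax
  · exact hne (Fin.ext h')
  · exact key m w hm hw h' hrul.symm hmax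

lemma coloring_bound {n k : ℕ} (C : Fin n → Fin k)
    (hC : IsUMColoring (pathEdges (pathGraph n)) C) : n ≤ 2^k - 1 := by
  rcases Nat.eq_zero_or_pos n with rfl | hn
  · have : (1:ℕ) ≤ 2^k := Nat.one_le_two_pow
    omega
  set C' : ℕ → ℕ := fun x => if h : x < n then (C ⟨x, h⟩).val else 0 with hC'def
  have hCval : ∀ y : Fin n, C' y.val = (C y).val := by
    intro y
    simp only [hC'def, dif_pos y.isLt, Fin.eta]
  have hmain := um_lower k C' 0 (n-1)
    (fun x _ hx => by
      have hxn : x < n := by omega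
      simp only [hC'def, dif_pos hxn]
      exact (C ⟨x, hxn⟩).isLt)
    ?_
  · omega
  intro c d _ hcd hdb
  have hdn : d < n := by omega
  have hcn : c < n := by omega
  obtain ⟨p, hp, hps⟩ := pg_exists_path' ⟨c, hcn⟩ ⟨d, hdn⟩ (by rw [Fin.le_def]; simpa using hcd)
  obtain ⟨v₀, ⟨hv₀mem, hv₀max⟩, hv₀uniq⟩ := hC _ ⟨_, _, p, hp, rfl⟩
  simp only [mem_toFinset_any] at hv₀mem hv₀max hv₀uniq
  have hmem : ∀ x : Fin n, x ∈ p.support ↔ (c ≤ x.val ∧ x.val ≤ d) := by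
    intro x
    rw [hps x, Fin.le_def, Fin.le_def]
  rw [hmem] at hv₀mem
  refine ⟨v₀.val, ⟨Finset.mem_Icc.mpr hv₀mem, ?_⟩, ?_⟩
  · intro x hx
    rw [Finset.mem_Icc] at hx
    have hxn : x < n := by omega
    have := hv₀max _ ((hmem ⟨x, hxn⟩).mpr (by simpa using hx))
    rw [Fin.le_def] at this
    rw [show C' x = (C ⟨x, hxn⟩).val from dif_pos hxn, hCval v₀]
    exact this
  · rintro y ⟨hymem, hymax⟩
    rw [Finset.mem_Icc] at hymem
    have hyn : y < n := by omega
    have heq : (⟨y, hyn⟩ : Fin n) = v₀ := by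
      apply hv₀uniq
      refine ⟨(hmem _).mpr (by simpa using hymem), ?_⟩
      intro z hz
      rw [hmem] at hz
      have := hymax z.val (Finset.mem_Icc.mpr hz)
      rw [Fin.le_def]
      rwa [hCval z, show C' y = (C ⟨y, hyn⟩).val from dif_pos hyn] at this
    rw [← heq]

lemma walk_exists_boundary {V : Type} {T : SimpleGraph V} {L : List V} :
    ∀ {z u : V} (_ : T.Walk z u), z ∉ L → u ∈ L →
      ∃ y w, T.Adj y w ∧ y ∉ L ∧ w ∈ L := by
  intro z u q
  induction q with
  | nil => intro h1 h2; exact absurd h2 h1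
  | @cons a b c h q ih =>
    intro h1 h2
    by_cases hb : b ∈ L
    · exact ⟨a, b, h, h1, hb⟩
    · exact ih hb h2

lemma getVert_mem_support {V : Type} {T : SimpleGraph V} {u v : V} {p : T.Walk u v} {i : ℕ}
    (hi : i ≤ p.length) : p.getVert i ∈ p.support :=
  Walk.mem_support_iff_exists_getVert.mpr ⟨i, rfl, hi⟩

lemma getVertInj {V : Type} {T : SimpleGraph V} {u v : V} {p : T.Walk u v}
    (hp : p.IsPath) : ∀ {i j : ℕ}, i ≤ p.length → j ≤ p.length →
      p.getVert i = p.getVert j → i = j := by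
  induction p with
  | nil => intro i j hi hj _; simp at hi hj; omega
  | @cons a b c h q ih =>
    rw [Walk.cons_isPath_iff] at hp
    intro i j hi hj hij
    match i, j with
    | 0, 0 => rfl
    | 0, j+1 =>
      exfalso
      rw [Walk.getVert_zero, Walk.getVert_cons_succ] at hij
      exact hp.2 (hij ▸ getVert_mem_support (by simpa using hj))
    | i+1, 0 =>
      exfalso
      rw [Walk.getVert_zero, Walk.getVert_cons_succ] at hij
      exact hp.2 (hij ▸ getVert_mem_support (by simpa using hi))
    | i+1, j+1 =>
      rw [Walk.getVert_cons_succ, Walk.getVert_cons_succ] at hij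
      have := ih hp.1 (by simpa using hi) (by simpa using hj) hij
      omega

lemma exists_maximal_path {V : Type} [Fintype V] [Nonempty V] (T : SimpleGraph V) :
    ∃ (u v : V) (p : T.Walk u v), p.IsPath ∧
      ∀ (u' v' : V) (q : T.Walk u' v'), q.IsPath → q.length ≤ p.length := by
  set S : Set ℕ := {l | ∃ (u v : V) (p : T.Walk u v), p.IsPath ∧ p.length = l} with hS
  have hne : S.Nonempty := ⟨0, Classical.arbitrary V, Classical.arbitrary V, Walk.nil,
    Walk.IsPath.nil, rfl⟩
  have hbdd : BddAbove S := by
    refine ⟨Fintype.card V, ?_⟩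
    rintro l ⟨u, v, p, hp, rfl⟩
    exact le_of_lt hp.length_lt
  obtain ⟨u, v, p, hp, hlen⟩ := Nat.sSup_mem hne hbdd
  exact ⟨u, v, p, hp, fun u' v' q hq => hlen ▸ le_csSup hbdd ⟨u', v', q, hq, rfl⟩⟩

lemma tree_iso_path {V : Type} [Fintype V] (T : SimpleGraph V) (hT : T.IsTree)
    (hdeg : ∀ v : V, T.degree v < 3) :
    Nonempty (pathGraph (Fintype.card V) ≃g T) := by
  have hne : Nonempty V := hT.isConnected.nonempty
  obtain ⟨u, v, p, hp, hmax⟩ := exists_maximal_path T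
  -- p is Hamiltonian
  have hham : ∀ z, z ∈ p.support := by
    by_contra hcon
    push_neg at hcon
    obtain ⟨z, hz⟩ := hcon
    obtain ⟨q⟩ := hT.isConnected.preconnected z u
    obtain ⟨y, w, hadj, hy, hw⟩ := walk_exists_boundary q hz p.start_mem_support
    by_cases hwu : w = u
    · subst hwu
      have hp' : (Walk.cons hadj p).IsPath := hp.cons hy
      have := hmax _ _ _ hp'
      simp at this
    by_cases hwv : w = v
    · subst hwv
      have hyrev : y ∉ p.reverse.support := by
        rw [Walk.support_reverse, List.mem_reverse]; exact hy
      have hp' : (Walk.cons hadj p.reverse).IsPath := hp.reverse.cons hyrev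
      have := hmax _ _ _ hp'
      simp at this
    obtain ⟨k, hk, hkle⟩ := Walk.mem_support_iff_exists_getVert.mp hw
    have hk0 : k ≠ 0 := by
      intro h; subst h; rw [Walk.getVert_zero] at hk; exact hwu hk.symm
    have hkl : k ≠ p.length := by
      intro h; subst h; rw [Walk.getVert_length] at hk; exact hwv hk.symm
    have hadj1 : T.Adj (p.getVert (k-1)) w := by
      have := p.adj_getVert_succ (i := k-1) (by omega)
      rwa [show k - 1 + 1 = k from by omega, hk] at this
    have hadj2 : T.Adj w (p.getVert (k+1)) := by
      have := p.adj_getVert_succ (i := k) (by omega)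
      rwa [hk] at this
    have hab : p.getVert (k-1) ≠ p.getVert (k+1) := by
      intro h
      have := getVertInj hp (by omega) (by omega) h
      omega
    have hya : y ≠ p.getVert (k-1) := by
      intro h; exact hy (h ▸ getVert_mem_support (by omega))
    have hyb : y ≠ p.getVert (k+1) := by
      intro h; exact hy (h ▸ getVert_mem_support (by omega))
    have hsub : ({p.getVert (k-1), p.getVert (k+1), y} : Finset V) ⊆ T.neighborFinset w := by
      intro x hx
      rw [SimpleGraph.mem_neighborFinset]
      simp only [Finset.mem_insert, Finset.mem_singleton] at hx
      rcases hx with rfl | rfl | rfl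
      · exact hadj1.symm
      · exact hadj2
      · exact hadj.symm
    have hc3 : ({p.getVert (k-1), p.getVert (k+1), y} : Finset V).card = 3 :=
      Finset.card_eq_three.mpr ⟨_, _, _, hab, (Ne.symm hya), (Ne.symm hyb), rfl⟩
    have := Finset.card_le_card hsub
    rw [hc3] at this
    exact absurd (lt_of_le_of_lt this (hdeg w)) (lt_irrefl 3)
  have hnodup : p.support.Nodup := hp.support_nodup
  have huniv : p.support.toFinset = Finset.univ :=
    Finset.eq_univ_iff_forall.mpr fun z => List.mem_toFinset.mpr (hham z)
  have hlen : p.length + 1 = Fintype.card V := by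
    calc p.length + 1 = p.support.length := (Walk.length_support p).symm
    _ = p.support.toFinset.card := (List.toFinset_card_of_nodup hnodup).symm
    _ = Fintype.card V := by rw [huniv, Finset.card_univ]
  set n := Fintype.card V with hn
  set g : Fin n → V := fun i => p.getVert i.val with hg
  have hgi : Function.Injective g := by
    intro i j hij
    exact Fin.ext (getVertInj hp (by omega) (by omega) hij)
  have hgs : Function.Surjective g := by
    intro z
    obtain ⟨k, hk, hkle⟩ := Walk.mem_support_iff_exists_getVert.mp (hham z)
    exact ⟨⟨k, by omega⟩, hk⟩
  have hedge : ∀ a b, T.Adj a b →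
      ∃ m, m + 1 ≤ p.length ∧ s(a,b) = s(p.getVert m, p.getVert (m+1)) := by
    intro a b hab
    set E' : Finset (Sym2 V) :=
      (Finset.range p.length).image (fun m => s(p.getVert m, p.getVert (m+1))) with hE'
    have hsub : E' ⊆ T.edgeFinset := by
      intro e he
      rw [hE', Finset.mem_image] at he
      obtain ⟨m, hm, rfl⟩ := he
      rw [Finset.mem_range] at hm
      exact SimpleGraph.mem_edgeFinset.mpr (p.adj_getVert_succ hm)
    have hcard : E'.card = p.length := by
      rw [hE', Finset.card_image_of_injOn, Finset.card_range]
      intro m hm m' hm' hmm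
      rw [Finset.mem_coe, Finset.mem_range] at hm hm'
      rw [Sym2.eq_iff] at hmm
      rcases hmm with ⟨h1, _⟩ | ⟨h1, h2⟩
      · exact getVertInj hp (by omega) (by omega) h1
      · have e1 := getVertInj hp (by omega) (by omega) h1
        have e2 := getVertInj hp (by omega) (by omega) h2
        omega
    have hEcard : T.edgeFinset.card = p.length := by
      have := hT.card_edgeFinset
      omega
    have hEq : E' = T.edgeFinset :=
      Finset.eq_of_subset_of_card_le hsub (by rw [hcard, hEcard])
    have : s(a, b) ∈ E' := by
      rw [hEq]
      exact SimpleGraph.mem_edgeFinset.mpr hab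
    rw [hE', Finset.mem_image] at this
    obtain ⟨m, hm, heq⟩ := this
    rw [Finset.mem_range] at hm
    exact ⟨m, by omega, heq.symm⟩
  refine ⟨{ toEquiv := Equiv.ofBijective g ⟨hgi, hgs⟩, map_rel_iff' := ?_ }⟩
  intro i j
  show T.Adj (g i) (g j) ↔ (pathGraph n).Adj i j
  constructor
  · intro h
    obtain ⟨m, hm, heq⟩ := hedge _ _ h
    rw [Sym2.eq_iff] at heq
    rw [pathGraph_adj]
    rcases heq with ⟨h1, h2⟩ | ⟨h1, h2⟩
    · have e1 := getVertInj hp (by omega) (by omega) h1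
      have e2 := getVertInj hp (by omega) (by omega) h2
      omega
    · have e1 := getVertInj hp (by omega) (by omega) h1
      have e2 := getVertInj hp (by omega) (by omega) h2
      omega
  · intro h
    rw [pathGraph_adj] at h
    rcases h with h | h
    · have hadj := p.adj_getVert_succ (i := i.val) (by omega)
      show T.Adj (p.getVert i.val) (p.getVert j.val)
      rw [← h]
      exact hadj
    · have hadj := p.adj_getVert_succ (i := j.val) (by omega)
      show T.Adj (p.getVert i.val) (p.getVert j.val)
      rw [← h]
      exact hadj.symm

lemma induce_ne_top {V : Type} {T : SimpleGraph V} (x : V) :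
    ((⊤ : T.Subgraph).induce {v | v ≠ x}) ≠ ⊤ := by
  intro h
  have hx : x ∈ ((⊤ : T.Subgraph).induce {v | v ≠ x}).verts := by
    rw [h]; trivial
  rw [SimpleGraph.Subgraph.induce_verts] at hx
  exact hx rfl

lemma delete_vertex_iso {V : Type} {T : SimpleGraph V} {n : ℕ} (hn : 1 ≤ n)
    (φ : T ≃g pathGraph n) :
    Nonempty ((((⊤ : T.Subgraph).induce {v | v ≠ φ.symm ⟨n-1, by omega⟩}).coe) ≃g
      pathGraph (n-1)) := by
  set x : V := φ.symm ⟨n-1, by omega⟩ with hx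
  have hφx : ∀ a : V, a ≠ x → (φ a).val < n - 1 := by
    intro a ha
    have h1 : φ a ≠ ⟨n-1, by omega⟩ := by
      intro h
      apply ha
      rw [hx, ← h, RelIso.symm_apply_apply]
    have := (φ a).isLt
    rw [Ne, Fin.ext_iff] at h1
    simp only [Fin.val_mk] at h1
    omega
  refine ⟨{ toFun := fun a => ⟨(φ a.val).val, hφx a.val a.prop⟩,
            invFun := fun b => ⟨φ.symm ⟨b.val, by omega⟩, ?_⟩,
            left_inv := ?_, right_inv := ?_, map_rel_iff' := ?_ }⟩
  · intro h
    have : (⟨b.val, by omega⟩ : Fin n) = ⟨n-1, by omega⟩ := by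
      apply φ.symm.injective
      rw [h]
    rw [Fin.ext_iff] at this
    simp only [Fin.val_mk] at this
    have := b.isLt
    omega
  · intro a
    apply Subtype.ext
    simp only []
    rw [Fin.eta, RelIso.symm_apply_apply]
  · intro b
    apply Fin.ext
    simp only []
    rw [RelIso.apply_symm_apply]
  · intro a b
    simp only [Equiv.coe_fn_mk]
    rw [pathGraph_adj]
    simp only [Fin.val_mk]
    rw [SimpleGraph.Subgraph.coe_adj, SimpleGraph.Subgraph.induce_adj,
      SimpleGraph.Subgraph.top_adj]
    have hT : T.Adj a.val b.val ↔ (pathGraph n).Adj (φ a.val) (φ b.val) := φ.map_rel_iff.symm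
    rw [pathGraph_adj] at hT
    constructor
    · intro h
      exact ⟨a.prop, b.prop, hT.mpr (by omega)⟩
    · rintro ⟨_, _, h⟩
      have := hT.mp h
      omega

theorem stmt10 {V : Type} [Fintype V] (l : ℕ) (T : SimpleGraph V) (hT : T.IsTree)
    (hcrit : UMCriticalK (l + 1) T) (hdeg : ∀ v : V, T.degree v < 3) :
    Nonempty (T ≃g SimpleGraph.pathGraph (2 ^ l)) := by
  have hneV : Nonempty V := hT.isConnected.nonempty
  obtain ⟨φ0⟩ := tree_iso_path T hT hdeg
  set n := Fintype.card V with hn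
  let φ : T ≃g SimpleGraph.pathGraph n := φ0.symm
  have hUM : UM T = l + 1 := hcrit.2
  have hUMpg : UM (SimpleGraph.pathGraph n) = l + 1 := by
    rw [← UM_eq_of_iso φ]; exact hUM
  have hn1 : 1 ≤ n := Fintype.card_pos
  have h2l : 1 ≤ 2 ^ l := Nat.one_le_two_pow
  have hlow : 2 ^ l ≤ n := by
    by_contra hcon
    push_neg at hcon
    have : UM (SimpleGraph.pathGraph n) ≤ l := umNum_le (exists_ruler_coloring (by omega))
    omega
  have hner := induce_ne_top (T := T) (φ.symm ⟨n-1, by omega⟩)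
  have hcr := hcrit.1 _ hner
  obtain ⟨ψ⟩ := delete_vertex_iso hn1 φ
  have hlt : UM (SimpleGraph.pathGraph (n-1)) < l + 1 := by
    rw [← UM_eq_of_iso ψ]
    rw [hUM] at hcr
    exact hcr
  obtain ⟨C, hC⟩ := exists_umColoring_of_UM_le (G := SimpleGraph.pathGraph (n-1)) (k := l)
    (by omega)
  have hup : n - 1 ≤ 2 ^ l - 1 := coloring_bound C hC
  have hneq : n = 2 ^ l := by omega
  rw [← hneq]
  exact ⟨φ⟩
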